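/- Let (Ω, ℱ, P) be a probability space, (ℱ_t) a filtration, and (M_t)_{t≥0}, (X_t)_{t≥0} càdlàg real- and E-valued adapted processes respectively, with M integrable at every time. Suppose 𝒞 ⊆ [0,∞) is dense and E[(M_{t_{k+1}} − M_{t_k})·φ_k(X_{t_k})⋯φ_1(X_{t_1})] = 0 for all finite ladders t₁ ≤ ⋯ ≤ t_{k+1} in 𝒞 and all bounded continuous φ₁,…,φ_k : E → ℝ. Then (M_t) is a martingale with respect to the natural filtration of X. -/

import Mathlib

open MeasureTheory Filter

/-- The natural filtration `ℱ^X_t = σ(X_s, 0 ≤ s ≤ t)` of an `E`-valued process. -/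
def natFiltration {Ω E : Type*} [MeasurableSpace E] (X : ℝ → Ω → E) (t : ℝ) :
    MeasurableSpace Ω :=
  ⨆ s ∈ Set.Icc (0 : ℝ) t, MeasurableSpace.comap (X s) inferInstance

section Aux
set_option linter.unusedSectionVars false
set_option linter.unusedVariables false
set_option maxHeartbeats 1000000

variable {Ω E : Type*} [MeasurableSpace Ω] [MetricSpace E] [MeasurableSpace E] [BorelSpace E]
  {μ : Measure Ω} [IsProbabilityMeasure μ] {M : ℝ → Ω → ℝ} {X : ℝ → Ω → E} {𝒞 : Set ℝ}

lemma natFiltration_le (hXmeas : ∀ t, Measurable (X t)) (t : ℝ) :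
    natFiltration X t ≤ ‹MeasurableSpace Ω› :=
  iSup₂_le fun s _ => (hXmeas s).comap_le

lemma natFiltration_mono (X : ℝ → Ω → E) {s t : ℝ} (h : s ≤ t) :
    natFiltration X s ≤ natFiltration X t :=
  iSup₂_le fun r hr =>
    le_iSup₂ (f := fun r (_ : r ∈ Set.Icc (0:ℝ) t) => MeasurableSpace.comap (X r) inferInstance)
      r ⟨hr.1, hr.2.trans h⟩

lemma dense_pick (h𝒞dense : Set.Ici (0:ℝ) ⊆ closure 𝒞) {a b : ℝ}
    (ha : 0 ≤ a) (hab : a < b) : ∃ c ∈ 𝒞, a < c ∧ c < b := by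
  have hx : (a+b)/2 ∈ closure 𝒞 := h𝒞dense (by simp only [Set.mem_Ici]; linarith)
  rw [Metric.mem_closure_iff] at hx
  obtain ⟨c, hc, hd⟩ := hx ((b-a)/4) (by linarith)
  rw [Real.dist_eq] at hd
  obtain ⟨h1, h2⟩ := abs_lt.mp hd
  exact ⟨c, hc, by linarith, by linarith⟩

lemma approx_seq (h𝒞dense : Set.Ici (0:ℝ) ⊆ closure 𝒞) {t s : ℝ}
    (ht : 0 ≤ t) (hts : t ≤ s) (hs : s ∈ 𝒞) :
    ∃ c : ℕ → ℝ, (∀ n, c n ∈ 𝒞 ∧ t ≤ c n ∧ c n ≤ s) ∧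
      Tendsto c atTop (nhdsWithin t (Set.Ici t)) := by
  have H : ∀ n : ℕ, ∃ x, x ∈ 𝒞 ∧ t ≤ x ∧ x ≤ s ∧ x < t + 1/(n+1) := by
    intro n
    have hpos : (0:ℝ) < 1/(n+1) := by positivity
    rcases eq_or_lt_of_le hts with rfl | hlt
    · exact ⟨t, hs, le_refl _, le_refl _, by linarith⟩
    · have hb : t < min s (t + 1/(n+1)) := lt_min hlt (by linarith)
      obtain ⟨x, hx𝒞, hx1, hx2⟩ := dense_pick h𝒞dense ht hb
      exact ⟨x, hx𝒞, hx1.le, (lt_min_iff.mp hx2).1.le, (lt_min_iff.mp hx2).2⟩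
  choose c hc1 hc2 hc3 hc4 using H
  refine ⟨c, fun n => ⟨hc1 n, hc2 n, hc3 n⟩, ?_⟩
  refine tendsto_nhdsWithin_of_tendsto_nhds_of_eventually_within _ ?_
    (Eventually.of_forall fun n => hc2 n)
  have hup : Tendsto (fun n : ℕ => t + 1/(n+1 : ℝ)) atTop (nhds t) := by
    have := tendsto_one_div_add_atTop_nhds_zero_nat (𝕜 := ℝ)
    simpa using tendsto_const_nhds.add this
  exact tendsto_of_tendsto_of_tendsto_of_le_of_le tendsto_const_nhds hup
    (fun n => hc2 n) (fun n => (hc4 n).le)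

/-- continuous approximations to the indicator of a closed set -/
noncomputable def clApprox (F : Set E) (n : ℕ) (x : E) : ℝ :=
  max (1 - n * Metric.infDist x F) 0

lemma clApprox_continuous (F : Set E) (n : ℕ) : Continuous (clApprox F n) :=
  (continuous_const.sub ((continuous_const.mul (Metric.continuous_infDist_pt F)))).max
    continuous_const

lemma clApprox_bdd (F : Set E) (n : ℕ) (x : E) : |clApprox F n x| ≤ 1 := by
  have h1 : Metric.infDist x F ≥ 0 := Metric.infDist_nonneg
  have : (0:ℝ) ≤ (n:ℝ) * Metric.infDist x F := by positivity
  rw [abs_le]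
  refine ⟨le_trans (by norm_num) (le_max_right _ _), max_le (by linarith) (by norm_num)⟩

lemma clApprox_tendsto {F : Set E} (hF : IsClosed F) (hne : F.Nonempty) (x : E) :
    Tendsto (fun n => clApprox F n x) atTop (nhds (Set.indicator F (fun _ => (1:ℝ)) x)) := by
  by_cases hx : x ∈ F
  · rw [Set.indicator_of_mem hx]
    have h : ∀ n : ℕ, clApprox F n x = 1 := by
      intro n
      simp [clApprox, Metric.infDist_zero_of_mem hx]
    simpa [h] using tendsto_const_nhds (x := (1:ℝ)) (f := atTop (α := ℕ))
  · rw [Set.indicator_of_notMem hx]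
    have hd : 0 < Metric.infDist x F := (hF.notMem_iff_infDist_pos hne).mp hx
    refine tendsto_const_nhds.congr' ?_
    rw [EventuallyEq, eventually_atTop]
    refine ⟨⌈(Metric.infDist x F)⁻¹⌉₊, fun n hn => ?_⟩
    have h1 : (Metric.infDist x F)⁻¹ ≤ (n:ℝ) := le_trans (Nat.le_ceil _) (by exact_mod_cast hn)
    have h2 : 1 ≤ (n:ℝ) * Metric.infDist x F := by
      rw [← inv_mul_cancel₀ hd.ne']
      exact mul_le_mul_of_nonneg_right h1 hd.le
    simp only [clApprox]
    rw [max_eq_right (by linarith)]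

variable (hXmeas : ∀ t, Measurable (X t)) (hMint : ∀ t, Integrable (M t) μ)
  (hMadapted : ∀ t : ℝ, 0 ≤ t → @Measurable Ω ℝ (natFiltration X t) _ (M t))
  (hMrc : ∀ ω, ∀ t : ℝ, ContinuousWithinAt (fun s => M s ω) (Set.Ici t) t)
  (hXrc : ∀ ω, ∀ t : ℝ, ContinuousWithinAt (fun s => X s ω) (Set.Ici t) t)
  (h𝒞 : 𝒞 ⊆ Set.Ici 0) (h𝒞dense : Set.Ici (0 : ℝ) ⊆ closure 𝒞)
  (hladder : ∀ (k : ℕ) (t : Fin k → ℝ) (s u : ℝ), s ∈ 𝒞 → u ∈ 𝒞 → s ≤ u →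
    (∀ i, t i ∈ 𝒞 ∧ t i ≤ s) →
    ∀ φ : Fin k → E → ℝ, (∀ i, Continuous (φ i) ∧ ∃ C, ∀ x, |φ i x| ≤ C) →
      ∫ ω, (M u ω - M s ω) * ∏ i, φ i (X (t i) ω) ∂μ = 0)

include hXmeas hMint hMadapted hMrc hXrc h𝒞 h𝒞dense hladder

/-- Step A: ladder identity with arbitrary (not necessarily `𝒞`) inner times. -/
lemma stepA (k : ℕ) (t : Fin k → ℝ) (s u : ℝ) (hs : s ∈ 𝒞) (hu : u ∈ 𝒞) (hsu : s ≤ u)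
    (ht : ∀ i, 0 ≤ t i ∧ t i ≤ s)
    (φ : Fin k → E → ℝ) (hφ : ∀ i, Continuous (φ i) ∧ ∃ C, ∀ x, |φ i x| ≤ C) :
    ∫ ω, (M u ω - M s ω) * ∏ i, φ i (X (t i) ω) ∂μ = 0 := by
  have hc : ∀ i : Fin k, ∃ c : ℕ → ℝ, (∀ n, c n ∈ 𝒞 ∧ t i ≤ c n ∧ c n ≤ s) ∧
      Tendsto c atTop (nhdsWithin (t i) (Set.Ici (t i))) :=
    fun i => approx_seq h𝒞dense (ht i).1 (ht i).2 hs
  choose c hc1 hc2 using hc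
  choose C hC using fun i => (hφ i).2
  set C' : Fin k → ℝ := fun i => max (C i) 0 with hC'
  have hC'bdd : ∀ i x, |φ i x| ≤ C' i := fun i x => (hC i x).trans (le_max_left _ _)
  have hzero : ∀ n : ℕ,
      ∫ ω, (M u ω - M s ω) * ∏ i, φ i (X (c i n) ω) ∂μ = 0 := by
    intro n
    exact hladder k (fun i => c i n) s u hs hu hsu
      (fun i => ⟨(hc1 i n).1, (hc1 i n).2.2⟩) φ hφ
  have hlim : Tendsto (fun n => ∫ ω, (M u ω - M s ω) * ∏ i, φ i (X (c i n) ω) ∂μ)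
      atTop (nhds (∫ ω, (M u ω - M s ω) * ∏ i, φ i (X (t i) ω) ∂μ)) := by
    refine tendsto_integral_of_dominated_convergence
      (fun ω => (|M u ω| + |M s ω|) * ∏ i, C' i) ?_ ?_ ?_ ?_
    · intro n
      refine ((hMint u).1.sub (hMint s).1).mul ?_
      exact (Finset.univ.measurable_prod
        (fun i _ => ((hφ i).1.measurable.comp (hXmeas (c i n))))).aestronglyMeasurable
    · exact ((hMint u).abs.add (hMint s).abs).mul_const _
    · intro n
      refine Eventually.of_forall fun ω => ?_
      rw [Real.norm_eq_abs, abs_mul]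
      refine mul_le_mul ?_ ?_ (abs_nonneg _) (by positivity)
      · exact abs_sub _ _
      · rw [Finset.abs_prod]
        exact Finset.prod_le_prod (fun i _ => abs_nonneg _) (fun i _ => hC'bdd i _)
    · refine Eventually.of_forall fun ω => ?_
      refine Tendsto.const_mul _ ?_
      refine tendsto_finset_prod _ fun i _ => ?_
      have hX : Tendsto (fun n => X (c i n) ω) atTop (nhds (X (t i) ω)) :=
        (hXrc ω (t i)).tendsto.comp (hc2 i)
      exact ((hφ i).1.continuousAt.tendsto).comp hX
  rw [funext hzero] at hlim
  exact tendsto_nhds_unique hlim tendsto_const_nhds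

/-- Step B: ladder identity with indicators of closed sets. -/
lemma stepB (k : ℕ) (t : Fin k → ℝ) (s u : ℝ) (hs : s ∈ 𝒞) (hu : u ∈ 𝒞) (hsu : s ≤ u)
    (ht : ∀ i, 0 ≤ t i ∧ t i ≤ s)
    (F : Fin k → Set E) (hFcl : ∀ i, IsClosed (F i)) :
    ∫ ω, (M u ω - M s ω) * ∏ i, Set.indicator (F i) (fun _ => (1:ℝ)) (X (t i) ω) ∂μ = 0 := by
  by_cases hne : ∀ i, (F i).Nonempty
  case neg =>
    push_neg at hne
    obtain ⟨i, hi⟩ := hne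
    have h : ∀ ω, (M u ω - M s ω) * ∏ i, Set.indicator (F i) (fun _ => (1:ℝ)) (X (t i) ω) = 0 := by
      intro ω
      have h0 : Set.indicator (F i) (fun _ => (1:ℝ)) (X (t i) ω) = 0 := by simp [hi]
      rw [Finset.prod_eq_zero (Finset.mem_univ i) h0, mul_zero]
    simp only [h, integral_zero]
  case pos =>
    have hzero : ∀ n, ∫ ω, (M u ω - M s ω) * ∏ i, clApprox (F i) n (X (t i) ω) ∂μ = 0 := by
      intro n
      exact stepA hXmeas hMint hMadapted hMrc hXrc h𝒞 h𝒞dense hladder k t s u hs hu hsu ht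
        (fun i => clApprox (F i) n) (fun i => ⟨clApprox_continuous _ _, 1, clApprox_bdd _ _⟩)
    have hlim : Tendsto (fun n => ∫ ω, (M u ω - M s ω) * ∏ i, clApprox (F i) n (X (t i) ω) ∂μ)
        atTop (nhds (∫ ω, (M u ω - M s ω) *
          ∏ i, Set.indicator (F i) (fun _ => (1:ℝ)) (X (t i) ω) ∂μ)) := by
      refine tendsto_integral_of_dominated_convergence
        (fun ω => (|M u ω| + |M s ω|) * 1) ?_ ?_ ?_ ?_
      · intro n
        refine ((hMint u).1.sub (hMint s).1).mul ?_
        exact (Finset.univ.measurable_prod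
          (fun i _ => ((clApprox_continuous (F i) n).measurable.comp
            (hXmeas (t i))))).aestronglyMeasurable
      · exact ((hMint u).abs.add (hMint s).abs).mul_const _
      · intro n
        refine Eventually.of_forall fun ω => ?_
        rw [Real.norm_eq_abs, abs_mul]
        refine mul_le_mul (abs_sub _ _) ?_ (abs_nonneg _) (by positivity)
        rw [Finset.abs_prod]
        calc ∏ i, |clApprox (F i) n (X (t i) ω)| ≤ ∏ i : Fin k, (1:ℝ) :=
              Finset.prod_le_prod (fun i _ => abs_nonneg _) (fun i _ => clApprox_bdd _ _ _)
          _ = 1 := Finset.prod_const_one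
      · refine Eventually.of_forall fun ω => ?_
        exact Tendsto.const_mul _
          (tendsto_finset_prod _ fun i _ => clApprox_tendsto (hFcl i) (hne i) _)
    rw [funext hzero] at hlim
    exact tendsto_nhds_unique hlim tendsto_const_nhds

/-- Step C: vanishing of the increment integral over all sets of the natural filtration. -/
lemma stepC (s u : ℝ) (hs : s ∈ 𝒞) (hu : u ∈ 𝒞) (hsu : s ≤ u) :
    ∀ A : Set Ω, MeasurableSet[natFiltration X s] A →
      ∫ ω in A, (M u ω - M s ω) ∂μ = 0 := by
  have h0 : ∫ ω, (M u ω - M s ω) ∂μ = 0 := by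
    have := stepA hXmeas hMint hMadapted hMrc hXrc h𝒞 h𝒞dense hladder 0 (fun i : Fin 0 => Fin.elim0 i) s u hs hu hsu
      (fun i : Fin 0 => Fin.elim0 i) (fun i : Fin 0 => Fin.elim0 i) (fun i : Fin 0 => Fin.elim0 i)
    simpa using this
  classical
  set π : ℝ → Set (Set Ω) := fun r =>
    if r ∈ Set.Icc (0:ℝ) s then {A | ∃ F : Set E, IsClosed F ∧ A = X r ⁻¹' F} else ∅ with hπ
  have hkey : ∀ r ∈ Set.Icc (0:ℝ) s,
      MeasurableSpace.comap (X r) inferInstance = MeasurableSpace.generateFrom (π r) := by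
    intro r hr
    have hb : (inferInstance : MeasurableSpace E)
        = MeasurableSpace.generateFrom {F : Set E | IsClosed F} := by
      rw [BorelSpace.measurable_eq (α := E), borel_eq_generateFrom_isClosed]
    rw [hb, MeasurableSpace.comap_generateFrom]
    congr 1
    simp only [hπ, if_pos hr]
    ext A
    constructor
    · rintro ⟨F, hF, rfl⟩
      exact ⟨F, hF, rfl⟩
    · rintro ⟨F, hF, rfl⟩
      exact ⟨F, hF, rfl⟩
  have h_eq : natFiltration X s
      = MeasurableSpace.generateFrom (piiUnionInter π (Set.Icc (0:ℝ) s)) := by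
    refine le_antisymm ?_ ?_
    · refine iSup₂_le fun r hr => ?_
      rw [hkey r hr]
      exact le_generateFrom_piiUnionInter _ hr
    · refine generateFrom_piiUnionInter_le π ?_ _
      intro r
      by_cases hr : r ∈ Set.Icc (0:ℝ) s
      · rw [← hkey r hr]
        exact le_iSup₂ (f := fun r (_ : r ∈ Set.Icc (0:ℝ) s) =>
          MeasurableSpace.comap (X r) inferInstance) r hr
      · refine MeasurableSpace.generateFrom_le ?_
        intro A hA
        simp only [hπ, if_neg hr] at hA
        exact absurd hA (Set.notMem_empty A)
  have h_pi : IsPiSystem (piiUnionInter π (Set.Icc (0:ℝ) s)) := by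
    refine isPiSystem_piiUnionInter π (fun r => ?_) _
    intro A hA B hB hAB
    by_cases hr : r ∈ Set.Icc (0:ℝ) s
    · simp only [hπ, if_pos hr] at hA hB ⊢
      obtain ⟨F1, hF1, rfl⟩ := hA
      obtain ⟨F2, hF2, rfl⟩ := hB
      exact ⟨F1 ∩ F2, hF1.inter hF2, (Set.preimage_inter).symm⟩
    · simp only [hπ, if_neg hr] at hA
      exact absurd hA (Set.notMem_empty _)
  intro A hA
  refine MeasurableSpace.induction_on_inter (m := natFiltration X s)
    (C := fun A _ => ∫ ω in A, (M u ω - M s ω) ∂μ = 0) h_eq h_pi ?_ ?_ ?_ ?_ _ hA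
  · simp
  · rintro B ⟨pt, hptS, f, hf, rfl⟩
    have hf' : ∀ x ∈ pt, ∃ F : Set E, IsClosed F ∧ f x = X x ⁻¹' F := by
      intro x hx
      have h := hf x hx
      simp only [hπ] at h
      rwa [if_pos (hptS hx)] at h
    choose! F hFcl hfeq using hf'
    have hB_meas : MeasurableSet (⋂ x ∈ pt, f x) := by
      refine Set.Finite.measurableSet_biInter pt.finite_toSet fun x hx => ?_
      rw [hfeq x hx]
      exact (hFcl x hx).measurableSet.preimage (hXmeas x)
    rw [← integral_indicator hB_meas]
    set σ := pt.orderIsoOfFin (rfl : pt.card = pt.card) with hσ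
    have hrw : ∀ ω, Set.indicator (⋂ x ∈ pt, f x) (fun ω => M u ω - M s ω) ω
        = (M u ω - M s ω) * ∏ i : Fin pt.card,
            Set.indicator (F ((σ i : ℝ))) (fun _ => (1:ℝ)) (X ((σ i : ℝ)) ω) := by
      intro ω
      by_cases hω : ω ∈ ⋂ x ∈ pt, f x
      · rw [Set.indicator_of_mem hω]
        have h1 : ∀ i : Fin pt.card,
            Set.indicator (F ((σ i : ℝ))) (fun _ => (1:ℝ)) (X ((σ i : ℝ)) ω) = 1 := by
          intro i
          have hmem : ((σ i : ℝ)) ∈ pt := (σ i).2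
          have hωf : ω ∈ f ((σ i : ℝ)) := by
            simp only [Set.mem_iInter] at hω
            exact hω _ hmem
          rw [hfeq _ hmem] at hωf
          exact Set.indicator_of_mem (Set.mem_preimage.mp hωf) _
        rw [Finset.prod_congr rfl (fun i _ => h1 i), Finset.prod_const_one, mul_one]
      · rw [Set.indicator_of_notMem hω]
        simp only [Set.mem_iInter, not_forall] at hω
        obtain ⟨x, hx, hωx⟩ := hω
        set i := σ.symm ⟨x, hx⟩ with hi
        have hσi : ((σ i : ℝ)) = x := by
          rw [hi, OrderIso.apply_symm_apply]
        have h2 : Set.indicator (F ((σ i : ℝ))) (fun _ => (1:ℝ)) (X ((σ i : ℝ)) ω) = 0 := by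
          rw [hσi]
          have : X x ω ∉ F x := by
            intro hmem
            apply hωx
            rw [hfeq x hx]
            exact hmem
          exact Set.indicator_of_notMem this _
        rw [Finset.prod_eq_zero (Finset.mem_univ i) h2, mul_zero]
  -- now apply stepB
    calc ∫ ω, Set.indicator (⋂ x ∈ pt, f x) (fun ω => M u ω - M s ω) ω ∂μ
        = ∫ ω, (M u ω - M s ω) * ∏ i : Fin pt.card,
            Set.indicator (F ((σ i : ℝ))) (fun _ => (1:ℝ)) (X ((σ i : ℝ)) ω) ∂μ := by
          exact integral_congr_ae (Eventually.of_forall hrw)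
      _ = 0 := by
          refine stepB hXmeas hMint hMadapted hMrc hXrc h𝒞 h𝒞dense hladder pt.card (fun i => (σ i : ℝ)) s u
            hs hu hsu (fun i => ?_) (fun i => F ((σ i : ℝ))) (fun i => hFcl _ (σ i).2)
          have := hptS (σ i).2
          exact ⟨this.1, this.2⟩
  · intro B hBm hB
    have hB' : MeasurableSet B := natFiltration_le hXmeas s _ hBm
    have hadd := integral_add_compl hB' ((hMint u).sub (hMint s))
    simp only [Pi.sub_apply] at hadd
    linarith [hadd, h0, hB]
  · intro g hdis hgm hg
    have hgm' : ∀ i, MeasurableSet (g i) := fun i => natFiltration_le hXmeas s _ (hgm i)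
    have hiu := integral_iUnion hgm' hdis ((hMint u).sub (hMint s)).integrableOn
    simp only [Pi.sub_apply] at hiu
    rw [hiu]
    have hg' : ∀ i, ∫ ω in g i, (M u ω - M s ω) ∂μ = 0 := hg
    simp [hg']

/-- Step C': conditional expectation form, times in `𝒞`. -/
lemma stepC' (s u : ℝ) (hs : s ∈ 𝒞) (hu : u ∈ 𝒞) (hsu : s ≤ u) :
    μ[M u | natFiltration X s] =ᵐ[μ] M s := by
  have hm := natFiltration_le (X := X) hXmeas s
  refine (ae_eq_condExp_of_forall_setIntegral_eq hm (hMint u)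
    (fun A hA _ => (hMint s).integrableOn) (fun A hA _ => ?_) ?_).symm
  · have hz := stepC hXmeas hMint hMadapted hMrc hXrc h𝒞 h𝒞dense hladder s u hs hu hsu A hA
    have h1 : ∫ ω in A, (M u ω - M s ω) ∂μ
        = ∫ ω in A, M u ω ∂μ - ∫ ω in A, M s ω ∂μ :=
      integral_sub (hMint u).integrableOn (hMint s).integrableOn
    linarith
  · exact StronglyMeasurable.aestronglyMeasurable
      (Measurable.stronglyMeasurable (hMadapted s (h𝒞 hs)))

/-- Step D: set-integral identity at an arbitrary left time. -/
lemma stepD (r U : ℝ) (hr : 0 ≤ r) (hU : U ∈ 𝒞) (hrU : r ≤ U)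
    (A : Set Ω) (hA : MeasurableSet[natFiltration X r] A) :
    ∫ ω in A, M U ω ∂μ = ∫ ω in A, M r ω ∂μ := by
  obtain ⟨c, hc, hctend⟩ := approx_seq h𝒞dense hr hrU hU
  have hAc : ∀ n, MeasurableSet[natFiltration X (c n)] A :=
    fun n => natFiltration_mono X (hc n).2.1 A hA
  have hconst : ∀ n, ∫ ω in A, M (c n) ω ∂μ = ∫ ω in A, M U ω ∂μ := by
    intro n
    have hz := stepC hXmeas hMint hMadapted hMrc hXrc h𝒞 h𝒞dense hladder (c n) U (hc n).1 hU (hc n).2.2 A (hAc n)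
    have h1 : ∫ ω in A, (M U ω - M (c n) ω) ∂μ
        = ∫ ω in A, M U ω ∂μ - ∫ ω in A, M (c n) ω ∂μ :=
      integral_sub (hMint U).integrableOn (hMint (c n)).integrableOn
    linarith
  have hcond : ∀ n, M (c n) =ᵐ[μ] μ[M U | natFiltration X (c n)] := fun n =>
    (stepC' hXmeas hMint hMadapted hMrc hXrc h𝒞 h𝒞dense hladder (c n) U (hc n).1 hU (hc n).2.2).symm
  have hUI : UnifIntegrable (fun n => M (c n)) 1 μ := by
    have h1 : UniformIntegrable (fun n => μ[M U | natFiltration X (c n)]) 1 μ :=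
      (hMint U).uniformIntegrable_condExp (fun n => natFiltration_le hXmeas _)
    exact h1.2.1.ae_eq (fun n => (hcond n).symm)
  have htd : ∀ ω, Tendsto (fun n => M (c n) ω) atTop (nhds (M r ω)) :=
    fun ω => (hMrc ω r).tendsto.comp hctend
  have hL1 : Tendsto (fun n => eLpNorm ((fun n => M (c n)) n - M r) 1 μ) atTop (nhds 0) :=
    tendsto_Lp_finite_of_tendsto_ae le_rfl ENNReal.one_ne_top
      (fun n => (hMint (c n)).1) (memLp_one_iff_integrable.2 (hMint r)) hUI
      (Eventually.of_forall htd)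
  have hset : Tendsto (fun n => ∫ ω in A, M (c n) ω ∂μ) atTop
      (nhds (∫ ω in A, M r ω ∂μ)) := by
    refine tendsto_setIntegral_of_L1 (M r) (hMint r).1
      (Eventually.of_forall fun n => hMint (c n)) ?_ A
    simp_rw [eLpNorm_one_eq_lintegral_enorm, Pi.sub_apply] at hL1
    exact hL1
  rw [funext hconst] at hset
  exact tendsto_nhds_unique tendsto_const_nhds hset

/-- Step D': conditional expectation form at an arbitrary left time. -/
lemma stepD' (r U : ℝ) (hr : 0 ≤ r) (hU : U ∈ 𝒞) (hrU : r ≤ U) :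
    μ[M U | natFiltration X r] =ᵐ[μ] M r := by
  have hm := natFiltration_le (X := X) hXmeas r
  refine (ae_eq_condExp_of_forall_setIntegral_eq hm (hMint U)
    (fun A hA _ => (hMint r).integrableOn) (fun A hA _ =>
      (stepD hXmeas hMint hMadapted hMrc hXrc h𝒞 h𝒞dense hladder r U hr hU hrU A hA).symm)
    ?_).symm
  exact StronglyMeasurable.aestronglyMeasurable
    (Measurable.stronglyMeasurable (hMadapted r hr))

end Aux

theorem martingale_from_dense_ladders {Ω E : Type*} [MeasurableSpace Ω]
    [MetricSpace E] [MeasurableSpace E] [BorelSpace E]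
    (μ : Measure Ω) [IsProbabilityMeasure μ]
    (M : ℝ → Ω → ℝ) (X : ℝ → Ω → E)
    (hXmeas : ∀ t, Measurable (X t))
    (hMint : ∀ t, Integrable (M t) μ)
    -- `M` is adapted to the natural filtration of `X`:
    (hMadapted : ∀ t : ℝ, 0 ≤ t → @Measurable Ω ℝ (natFiltration X t) _ (M t))
    -- paths of `M` and `X` are càdlàg (right continuity is what is used):
    (hMrc : ∀ ω, ∀ t : ℝ, ContinuousWithinAt (fun s => M s ω) (Set.Ici t) t)
    (hXrc : ∀ ω, ∀ t : ℝ, ContinuousWithinAt (fun s => X s ω) (Set.Ici t) t)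
    -- a dense subset of `[0,∞)`:
    (𝒞 : Set ℝ) (h𝒞 : 𝒞 ⊆ Set.Ici 0) (h𝒞dense : Set.Ici (0 : ℝ) ⊆ closure 𝒞)
    -- the ladder condition:
    (hladder : ∀ (k : ℕ) (t : Fin k → ℝ) (s u : ℝ), s ∈ 𝒞 → u ∈ 𝒞 → s ≤ u →
      (∀ i, t i ∈ 𝒞 ∧ t i ≤ s) →
      ∀ φ : Fin k → E → ℝ, (∀ i, Continuous (φ i) ∧ ∃ C, ∀ x, |φ i x| ≤ C) →
        ∫ ω, (M u ω - M s ω) * ∏ i, φ i (X (t i) ω) ∂μ = 0) :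
    -- conclusion: `M` is a martingale for the natural filtration of `X`
    ∀ s t : ℝ, 0 ≤ s → s ≤ t →
      μ[M t|natFiltration X s] =ᵐ[μ] M s := by
  intro s t hs hst
  have ht0 : 0 ≤ t := hs.trans hst
  obtain ⟨U, hU𝒞, hU1, _⟩ := dense_pick h𝒞dense ht0 (lt_add_one t)
  have h1 : μ[M U | natFiltration X s] =ᵐ[μ] M s :=
    stepD' hXmeas hMint hMadapted hMrc hXrc h𝒞 h𝒞dense hladder s U hs hU𝒞 (hst.trans hU1.le)
  have h2 : μ[M U | natFiltration X t] =ᵐ[μ] M t :=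
    stepD' hXmeas hMint hMadapted hMrc hXrc h𝒞 h𝒞dense hladder t U ht0 hU𝒞 hU1.le
  have h3 : μ[M t | natFiltration X s] =ᵐ[μ] μ[μ[M U | natFiltration X t] | natFiltration X s] :=
    condExp_congr_ae h2.symm
  have h4 : μ[μ[M U | natFiltration X t] | natFiltration X s] =ᵐ[μ] μ[M U | natFiltration X s] :=
    condExp_condExp_of_le (natFiltration_mono X hst) (natFiltration_le hXmeas t)
  exact h3.trans (h4.trans h1)
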